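/- Let 0<q<1 and let s, t ≥ 2 be integers. Then ζ[s] ζ[t] = ζ[s+t] + (1−q) ζ[s+t−1] + ζ[s,t] + ζ[t,s]. -/

import Mathlib

/-- The `q`-analog of a natural number: `[k]_q = (1-q^k)/(1-q)`. -/
noncomputable def qnum (q : ℝ) (k : ℕ) : ℝ := (1 - q ^ k) / (1 - q)

/-- The single `q`-zeta value `ζ[n] = Σ_{k≥1} q^{(n-1)k}/[k]_q^n`. -/
noncomputable def qzeta (q : ℝ) (n : ℕ) : ℝ :=
  ∑' k : ℕ, q ^ ((n - 1) * (k + 1)) / (qnum q (k + 1)) ^ n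

/-- The double `q`-zeta value
`ζ[a,b] = Σ_{k₁>k₂>0} (q^{(a-1)k₁}/[k₁]_q^a)(q^{(b-1)k₂}/[k₂]_q^b)`. -/
noncomputable def qzeta2 (q : ℝ) (a b : ℕ) : ℝ :=
  ∑' p : {p : ℕ × ℕ // p.2 < p.1 ∧ 0 < p.2},
    (q ^ ((a - 1) * p.1.1) / (qnum q p.1.1) ^ a) *
      (q ^ ((b - 1) * p.1.2) / (qnum q p.1.2) ^ b)

/-- The general term of the single q-zeta series. -/
noncomputable def fq (q : ℝ) (n k : ℕ) : ℝ := q ^ ((n - 1) * k) / (qnum q k) ^ n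

lemma qzeta_eq (q : ℝ) (n : ℕ) : qzeta q n = ∑' k : ℕ, fq q n (k + 1) := rfl

lemma qzeta2_eq (q : ℝ) (a b : ℕ) :
    qzeta2 q a b = ∑' p : {p : ℕ × ℕ // p.2 < p.1 ∧ 0 < p.2},
      fq q a p.1.1 * fq q b p.1.2 := rfl

lemma one_le_qnum {q : ℝ} (hq0 : 0 < q) (hq1 : q < 1) (k : ℕ) : 1 ≤ qnum q (k + 1) := by
  unfold qnum
  rw [le_div_iff₀ (by linarith)]
  have : q ^ (k + 1) ≤ q ^ 1 := pow_le_pow_of_le_one hq0.le hq1.le (by omega)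
  simpa using by linarith [this]

lemma fq_nonneg {q : ℝ} (hq0 : 0 < q) (hq1 : q < 1) (n k : ℕ) : 0 ≤ fq q n k := by
  unfold fq qnum
  have h1 : q ^ k ≤ 1 := pow_le_one₀ hq0.le hq1.le
  have h2 : (0:ℝ) ≤ (1 - q ^ k) / (1 - q) := div_nonneg (by linarith) (by linarith)
  exact div_nonneg (pow_nonneg hq0.le _) (pow_nonneg h2 _)

lemma summable_fq {q : ℝ} (hq0 : 0 < q) (hq1 : q < 1) (n : ℕ) (hn : 2 ≤ n) :
    Summable (fun k : ℕ => fq q n (k + 1)) := by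
  have hgeo : Summable (fun k : ℕ => q ^ (k + 1)) := by
    simpa [pow_succ] using (summable_geometric_of_lt_one hq0.le hq1).mul_right q
  refine Summable.of_nonneg_of_le (fun k => fq_nonneg hq0 hq1 n (k + 1)) (fun k => ?_) hgeo
  have hN := one_le_qnum hq0 hq1 k
  have hNn : 1 ≤ (qnum q (k + 1)) ^ n := one_le_pow₀ hN
  calc fq q n (k + 1) ≤ q ^ ((n - 1) * (k + 1)) := by
        unfold fq
        rw [div_le_iff₀ (by linarith)]
        nlinarith [pow_nonneg hq0.le ((n - 1) * (k + 1))]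
    _ ≤ q ^ (k + 1) := pow_le_pow_of_le_one hq0.le hq1.le (Nat.le_mul_of_pos_left _ (by omega))

lemma fq_key {q : ℝ} (hq0 : 0 < q) (hq1 : q < 1) {s t : ℕ} (hs : 2 ≤ s) (ht : 2 ≤ t) (k : ℕ) :
    fq q s (k + 1) * fq q t (k + 1)
      = fq q (s + t) (k + 1) + (1 - q) * fq q (s + t - 1) (k + 1) := by
  have hN : (0:ℝ) < qnum q (k + 1) := lt_of_lt_of_le one_pos (one_le_qnum hq0 hq1 k)
  obtain ⟨s', rfl⟩ : ∃ s', s = s' + 2 := ⟨s - 2, by omega⟩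
  obtain ⟨t', rfl⟩ : ∃ t', t = t' + 2 := ⟨t - 2, by omega⟩
  have hq1' : (1:ℝ) - q ≠ 0 := by linarith
  have hrel : (1 - q) * qnum q (k + 1) = 1 - q ^ (k + 1) := by
    unfold qnum; field_simp
  unfold fq
  simp only [show s' + 2 - 1 = s' + 1 from by omega, show t' + 2 - 1 = t' + 1 from by omega,
    show s' + 2 + (t' + 2) - 1 = s' + t' + 3 from by omega,
    show s' + t' + 3 - 1 = s' + t' + 2 from by omega]
  have h1 : q ^ ((s' + 1) * (k + 1)) * q ^ ((t' + 1) * (k + 1))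
      = q ^ ((s' + t' + 2) * (k + 1)) := by rw [← pow_add]; congr 1; ring
  have h2 : q ^ ((s' + t' + 3) * (k + 1)) = q ^ ((s' + t' + 2) * (k + 1)) * q ^ (k + 1) := by
    rw [← pow_add]; congr 1; ring
  rw [div_mul_div_comm, h1, h2]
  have hNe : qnum q (k+1) ≠ 0 := hN.ne'
  set A := q ^ ((s' + t' + 2) * (k + 1)) with hA
  set N := qnum q (k+1) with hNdef
  set M := N ^ (s' + t' + 3) with hM
  have hMe : M ≠ 0 := pow_ne_zero _ hNe
  have hpow : N ^ (s' + 2) * N ^ (t' + 2) = M * N := by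
    rw [← pow_add, show s' + 2 + (t' + 2) = s' + t' + 3 + 1 from by omega, pow_succ]
  have hpow2 : N ^ (s' + 2 + (t' + 2)) = M * N := by
    rw [show s' + 2 + (t' + 2) = s' + t' + 3 + 1 from by omega, pow_succ]
  rw [hpow, hpow2]
  rw [show ((1:ℝ)-q)*(A/M) = ((1-q)*N*A)/(M*N) from by field_simp, ← add_div]
  congr 1
  linear_combination (-A) * hrel

/-- The diagonal of `ℕ × ℕ`. -/
def diagEquiv : ℕ ≃ {p : ℕ × ℕ | p.1 = p.2} where
  toFun k := ⟨(k, k), rfl⟩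
  invFun p := p.1.1
  left_inv k := rfl
  right_inv := by rintro ⟨⟨a, b⟩, h⟩; simp only [Set.mem_setOf_eq] at h; subst h; rfl

/-- Shift equivalence for the upper part. -/
def upperEquiv : {p : ℕ × ℕ | p.2 < p.1} ≃ {p : ℕ × ℕ // p.2 < p.1 ∧ 0 < p.2} where
  toFun := fun ⟨⟨a, b⟩, h⟩ => ⟨(a + 1, b + 1), by
    have h' : b < a := h
    exact ⟨by omega, by omega⟩⟩
  invFun := fun ⟨⟨a, b⟩, h⟩ => ⟨(a - 1, b - 1), show b - 1 < a - 1 by omega⟩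
  left_inv := by rintro ⟨⟨a, b⟩, h⟩; simp
  right_inv := by
    rintro ⟨⟨a, b⟩, h1, h2⟩
    simp only [Subtype.mk.injEq, Prod.mk.injEq]
    omega

/-- Swap-and-shift equivalence for the lower part. -/
def lowerEquiv : {p : ℕ × ℕ | p.1 < p.2} ≃ {p : ℕ × ℕ // p.2 < p.1 ∧ 0 < p.2} where
  toFun := fun ⟨⟨a, b⟩, h⟩ => ⟨(b + 1, a + 1), by
    have h' : a < b := h
    exact ⟨by omega, by omega⟩⟩
  invFun := fun ⟨⟨a, b⟩, h⟩ => ⟨(b - 1, a - 1), show b - 1 < a - 1 by omega⟩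
  left_inv := by rintro ⟨⟨a, b⟩, h⟩; simp
  right_inv := by
    rintro ⟨⟨a, b⟩, h1, h2⟩
    simp only [Subtype.mk.injEq, Prod.mk.injEq]
    omega

set_option maxHeartbeats 1000000 in
/-- The q-stuffle product of two single q-zeta values. -/
theorem q_stuffle (q : ℝ) (hq0 : 0 < q) (hq1 : q < 1) (s t : ℕ) (hs : 2 ≤ s) (ht : 2 ≤ t) :
    qzeta q s * qzeta q t
      = qzeta q (s + t) + (1 - q) * qzeta q (s + t - 1) + qzeta2 q s t + qzeta2 q t s := by
  have hfs : Summable (fun k : ℕ => fq q s (k + 1)) := summable_fq hq0 hq1 s hs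
  have hft : Summable (fun k : ℕ => fq q t (k + 1)) := summable_fq hq0 hq1 t ht
  have hF : Summable (fun p : ℕ × ℕ => fq q s (p.1 + 1) * fq q t (p.2 + 1)) :=
    hfs.mul_of_nonneg hft (fun k => fq_nonneg hq0 hq1 s (k + 1))
      (fun k => fq_nonneg hq0 hq1 t (k + 1))
  set F : ℕ × ℕ → ℝ := fun p => fq q s (p.1 + 1) * fq q t (p.2 + 1) with hFdef
  have step1 : qzeta q s * qzeta q t = ∑' p : ℕ × ℕ, F p := by
    rw [qzeta_eq, qzeta_eq]
    exact Summable.tsum_mul_tsum hfs hft hF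
  set D : Set (ℕ × ℕ) := {p | p.1 = p.2} with hD
  set U : Set (ℕ × ℕ) := {p | p.2 < p.1} with hU
  set L : Set (ℕ × ℕ) := {p | p.1 < p.2} with hL
  have hsplit : ∀ p, F p = D.indicator F p + U.indicator F p + L.indicator F p := by
    intro p
    simp only [Set.indicator_apply, hD, hU, hL, Set.mem_setOf_eq]
    rcases lt_trichotomy p.1 p.2 with h | h | h <;>
      split_ifs <;> first | omega | ring
  have step2 : ∑' p : ℕ × ℕ, F p
      = (∑' p : ℕ × ℕ, D.indicator F p) + (∑' p : ℕ × ℕ, U.indicator F p)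
        + (∑' p : ℕ × ℕ, L.indicator F p) := by
    rw [tsum_congr hsplit, Summable.tsum_add ((hF.indicator D).add (hF.indicator U)) (hF.indicator L),
      Summable.tsum_add (hF.indicator D) (hF.indicator U)]
  -- diagonal part
  have hdiag : ∑' p : ℕ × ℕ, D.indicator F p
      = qzeta q (s + t) + (1 - q) * qzeta q (s + t - 1) := by
    rw [← tsum_subtype D F, ← diagEquiv.tsum_eq (fun x : D => F x.1)]
    have heq : ∀ k : ℕ,
        F ((diagEquiv k).1) = fq q (s + t) (k + 1) + (1 - q) * fq q (s + t - 1) (k + 1) :=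
      fun k => fq_key hq0 hq1 hs ht k
    rw [tsum_congr heq,
      Summable.tsum_add (summable_fq hq0 hq1 (s + t) (by omega))
        ((summable_fq hq0 hq1 (s + t - 1) (by omega)).mul_left (1 - q)),
      tsum_mul_left, qzeta_eq, qzeta_eq]
  -- upper part
  have hupper : ∑' p : ℕ × ℕ, U.indicator F p = qzeta2 q s t := by
    rw [← tsum_subtype U F, ← upperEquiv.symm.tsum_eq (fun x : U => F x.1), qzeta2_eq]
    apply tsum_congr
    rintro ⟨⟨a, b⟩, h1, h2⟩
    show fq q s (a - 1 + 1) * fq q t (b - 1 + 1) = fq q s a * fq q t b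
    rw [show a - 1 + 1 = a from by omega, show b - 1 + 1 = b from by omega]
  -- lower part
  have hlower : ∑' p : ℕ × ℕ, L.indicator F p = qzeta2 q t s := by
    rw [← tsum_subtype L F, ← lowerEquiv.symm.tsum_eq (fun x : L => F x.1), qzeta2_eq]
    apply tsum_congr
    rintro ⟨⟨a, b⟩, h1, h2⟩
    show fq q s (b - 1 + 1) * fq q t (a - 1 + 1) = fq q t a * fq q s b
    rw [show a - 1 + 1 = a from by omega, show b - 1 + 1 = b from by omega, mul_comm]
  rw [step1, step2, hdiag, hupper, hlower]
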